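/- Let K be the unique nonempty compact subset of ℝ satisfying 3·K = K ∪ (K + 2) (the classical middle-thirds Cantor set). Then H^s(K) = 1, where s = log 2/log 3 and H^s denotes the s-dimensional Hausdorff measure on ℝ. -/

import Mathlib

open MeasureTheory Set
open scoped ENNReal

noncomputable def cDig (n : ℕ) (x : ℝ) : ℝ := if ⌊x * 2 ^ (n+1)⌋ % 2 = 1 then 2 else 0

noncomputable def gMap (x : ℝ) : ℝ := ∑' n : ℕ, cDig n x / 3 ^ (n+1)

lemma cDig_nonneg (n : ℕ) (x : ℝ) : 0 ≤ cDig n x := by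
  unfold cDig; split <;> norm_num

lemma cDig_le_two (n : ℕ) (x : ℝ) : cDig n x ≤ 2 := by
  unfold cDig; split <;> norm_num

lemma gSummable (x : ℝ) : Summable (fun n : ℕ => cDig n x / 3 ^ (n+1)) := by
  refine Summable.of_nonneg_of_le
    (fun n => div_nonneg (cDig_nonneg n x) (by positivity)) (fun n => ?_)
    (((summable_geometric_of_lt_one (r := (1/3:ℝ)) (by norm_num) (by norm_num)).mul_left 2).comp_injective
      (add_left_injective 1))
  rw [div_le_iff₀ (by positivity)]
  calc cDig n x ≤ 2 := cDig_le_two n x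
  _ ≤ 2 * (1/3 : ℝ)^(n+1) * 3^(n+1) := by
      rw [mul_assoc, ← mul_pow]; norm_num

lemma gsum_aux : ∑' n : ℕ, 2 * (1/3 : ℝ) ^ (n+1) = 1 := by
  rw [tsum_mul_left]
  have : ∑' n : ℕ, (1/3 : ℝ) ^ (n+1) = 1/2 := by
    have h := tsum_geometric_of_lt_one (r := (1/3:ℝ)) (by norm_num) (by norm_num)
    calc ∑' n : ℕ, (1/3 : ℝ) ^ (n+1) = ∑' n : ℕ, (1/3 : ℝ) * (1/3)^n := by
          congr 1; ext n; ring
    _ = (1/3) * ∑' n : ℕ, (1/3:ℝ)^n := tsum_mul_left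
    _ = 1/2 := by rw [h]; norm_num
  rw [this]; norm_num

lemma gMap_nonneg (x : ℝ) : 0 ≤ gMap x :=
  tsum_nonneg (fun n => div_nonneg (cDig_nonneg n x) (by positivity))

lemma gMap_le_one (x : ℝ) : gMap x ≤ 1 := by
  rw [← gsum_aux]
  apply Summable.tsum_le_tsum _ (gSummable x)
    (((summable_geometric_of_lt_one (by norm_num) (by norm_num)).mul_left 2).comp_injective
      (add_left_injective 1))
  intro n
  rw [div_le_iff₀ (by positivity)]
  calc cDig n x ≤ 2 := cDig_le_two n x
  _ ≤ 2 * (1/3 : ℝ)^(n+1) * 3^(n+1) := by rw [mul_assoc, ← mul_pow]; norm_num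

lemma gMap_measurable : Measurable gMap := by
  have h : ∀ N : ℕ, Measurable (fun x => ∑ n ∈ Finset.range N, cDig n x / 3 ^ (n+1)) := by
    intro N
    apply Finset.measurable_sum
    intro n _
    apply Measurable.div_const
    have : Measurable fun x : ℝ => ⌊x * 2 ^ (n+1)⌋ :=
      Int.measurable_floor.comp (measurable_id.mul_const _)
    have hset : MeasurableSet {a : ℝ | ⌊a * 2 ^ (n+1)⌋ % 2 = 1} :=
      this (MeasurableSet.of_discrete (s := {k : ℤ | k % 2 = 1}))
    unfold cDig
    exact Measurable.ite hset measurable_const measurable_const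
  exact measurable_of_tendsto_metrizable h
    (tendsto_pi_nhds.2 fun x => (gSummable x).hasSum.tendsto_sum_nat)

lemma cDig_two_mul (n : ℕ) (x : ℝ) : cDig n (2 * x) = cDig (n+1) x := by
  unfold cDig
  have : 2 * x * 2 ^ (n+1) = x * 2 ^ (n+2) := by ring
  rw [this]

lemma cDig_two_mul_sub (n : ℕ) (x : ℝ) : cDig n (2 * x - 1) = cDig (n+1) x := by
  unfold cDig
  have h1 : (2 * x - 1) * 2 ^ (n+1) = x * 2 ^ (n+2) - (2 ^ (n+1) : ℤ) := by
    push_cast; ring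
  rw [h1, Int.floor_sub_intCast]
  have hd : (2:ℤ) ∣ 2 ^ (n+1) := dvd_pow_self 2 (Nat.succ_ne_zero n)
  have h2 : (⌊x * 2 ^ (n+2)⌋ - 2 ^ (n+1)) % 2 = ⌊x * 2 ^ (n+2)⌋ % 2 := by
    obtain ⟨c, hc⟩ := hd
    omega
  rw [h2]

lemma gMap_rec (x : ℝ) : gMap x = cDig 0 x / 3 + gMap (2 * x) / 3 := by
  have h1 : gMap x = cDig 0 x / 3 ^ (0+1) + ∑' n : ℕ, cDig (n+1) x / 3 ^ (n+2) :=
    Summable.tsum_eq_zero_add (gSummable x)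
  have h2 : gMap (2*x) = ∑' n : ℕ, cDig (n+1) x / 3 ^ (n+1) := by
    unfold gMap; congr 1; ext n; rw [cDig_two_mul]
  have h3 : ∑' n : ℕ, cDig (n+1) x / 3 ^ (n+2) = gMap (2*x) / 3 := by
    rw [h2, ← tsum_div_const]; congr 1; ext n; rw [pow_succ]; ring
  rw [h1, h3]; norm_num

lemma gMap_rec' (x : ℝ) : gMap x = cDig 0 x / 3 + gMap (2 * x - 1) / 3 := by
  have h2 : gMap (2*x - 1) = gMap (2 * x) := by
    unfold gMap; congr 1; ext n; rw [cDig_two_mul_sub, cDig_two_mul]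
  rw [h2]; exact gMap_rec x

lemma cDig_zero_of_lt_half {x : ℝ} (h0 : 0 ≤ x) (h1 : x < 1/2) : cDig 0 x = 0 := by
  have h : ⌊x * 2 ^ (0+1)⌋ = 0 := by
    rw [Int.floor_eq_zero_iff, Set.mem_Ico]
    norm_num
    constructor <;> nlinarith
  unfold cDig; rw [h]; norm_num

lemma cDig_zero_of_ge_half {x : ℝ} (h0 : 1/2 ≤ x) (h1 : x < 1) : cDig 0 x = 2 := by
  have h : ⌊x * 2 ^ (0+1)⌋ = 1 := by
    rw [Int.floor_eq_iff]
    push_cast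
    norm_num
    constructor <;> nlinarith
  unfold cDig; rw [h]; norm_num
noncomputable def cMu : Measure ℝ := (volume.restrict (Ico (0:ℝ) 1)).map gMap

lemma cMu_apply {A : Set ℝ} (hA : MeasurableSet A) :
    cMu A = volume (gMap ⁻¹' A ∩ Ico (0:ℝ) 1) := by
  rw [cMu, Measure.map_apply gMap_measurable hA,
    Measure.restrict_apply (gMap_measurable hA)]

lemma cMu_univ : cMu univ = 1 := by
  rw [cMu_apply MeasurableSet.univ]; simp

lemma cMu_le_one (A : Set ℝ) : cMu A ≤ 1 := by
  rw [← cMu_univ]; exact measure_mono (subset_univ A)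

lemma cMu_Iio : cMu (Iio (0:ℝ)) = 0 := by
  rw [cMu_apply measurableSet_Iio]
  convert measure_empty (μ := (volume : Measure ℝ))
  rw [eq_empty_iff_forall_notMem]
  rintro x ⟨hx, -⟩
  exact absurd hx (not_lt.2 (gMap_nonneg x))

lemma cMu_Ioi : cMu (Ioi (1:ℝ)) = 0 := by
  rw [cMu_apply measurableSet_Ioi]
  convert measure_empty (μ := (volume : Measure ℝ))
  rw [eq_empty_iff_forall_notMem]
  rintro x ⟨hx, -⟩
  exact absurd hx (not_lt.2 (gMap_le_one x))

lemma cMu_Icc_zero_of_lt {a b : ℝ} (h : b < 0) : cMu (Icc a b) = 0 := by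
  refine le_antisymm (le_trans (measure_mono ?_) cMu_Iio.le) zero_le
  intro x hx; exact lt_of_le_of_lt hx.2 h

lemma cMu_Icc_zero_of_gt {a b : ℝ} (h : 1 < a) : cMu (Icc a b) = 0 := by
  refine le_antisymm (le_trans (measure_mono ?_) cMu_Ioi.le) zero_le
  intro x hx; exact lt_of_lt_of_le h hx.1

lemma cMu_cut_hi (a b : ℝ) : cMu (Icc a b) ≤ cMu (Icc a 1) := by
  have : Icc a b ⊆ Icc a 1 ∪ Ioi 1 := by
    intro x hx
    rcases le_or_gt x 1 with h | h
    · exact Or.inl ⟨hx.1, h⟩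
    · exact Or.inr h
  calc cMu (Icc a b) ≤ cMu (Icc a 1) + cMu (Ioi 1) :=
        le_trans (measure_mono this) (measure_union_le _ _)
  _ = cMu (Icc a 1) := by rw [cMu_Ioi, add_zero]

lemma cMu_cut_lo (a b : ℝ) : cMu (Icc a b) ≤ cMu (Icc 0 b) := by
  have : Icc a b ⊆ Icc 0 b ∪ Iio 0 := by
    intro x hx
    rcases le_or_gt 0 x with h | h
    · exact Or.inl ⟨h, hx.2⟩
    · exact Or.inr h
  calc cMu (Icc a b) ≤ cMu (Icc 0 b) + cMu (Iio 0) :=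
        le_trans (measure_mono this) (measure_union_le _ _)
  _ = cMu (Icc 0 b) := by rw [cMu_Iio, add_zero]

lemma vol_half_preimage {S : Set ℝ} (hS : MeasurableSet S) :
    volume ((fun x : ℝ => 2 * x) ⁻¹' S) = 2⁻¹ * volume S := by
  rw [show ((fun x : ℝ => 2 * x) ⁻¹' S) = ((2 * ·) ⁻¹' S) from rfl,
    Real.volume_preimage_mul_left (by norm_num : (2:ℝ) ≠ 0)]
  congr 1
  rw [show |(2:ℝ)⁻¹| = 2⁻¹ by norm_num, ENNReal.ofReal_inv_of_pos (by norm_num)]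
  norm_num

lemma vol_affine_preimage {S : Set ℝ} (hS : MeasurableSet S) :
    volume ((fun x : ℝ => 2 * x - 1) ⁻¹' S) = 2⁻¹ * volume S := by
  have : (fun x : ℝ => 2 * x - 1) ⁻¹' S = (fun x : ℝ => 2 * x) ⁻¹' ((fun y : ℝ => y - 1) ⁻¹' S) := rfl
  rw [this, vol_half_preimage (by exact measurable_id.sub_const 1 hS)]
  congr 1
  have : (fun y : ℝ => y - 1) ⁻¹' S = (fun y : ℝ => y + (-1)) ⁻¹' S := by
    ext y; simp [sub_eq_add_neg]
  rw [this, measure_preimage_add_right]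

/-- Self-similarity of the Cantor measure. -/
lemma cMu_self {A : Set ℝ} (hA : MeasurableSet A) :
    cMu A = 2⁻¹ * cMu ((fun y => y / 3) ⁻¹' A) + 2⁻¹ * cMu ((fun y => (y + 2) / 3) ⁻¹' A) := by
  have hA0 : MeasurableSet ((fun y : ℝ => y / 3) ⁻¹' A) := (measurable_id.div_const 3) hA
  have hA1 : MeasurableSet ((fun y : ℝ => (y + 2) / 3) ⁻¹' A) :=
    ((measurable_id.add_const 2).div_const 3) hA
  have hsplit : gMap ⁻¹' A ∩ Ico (0:ℝ) 1
      = (gMap ⁻¹' A ∩ Ico (0:ℝ) 2⁻¹) ∪ (gMap ⁻¹' A ∩ Ico (2⁻¹:ℝ) 1) := by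
    rw [← inter_union_distrib_left, Ico_union_Ico_eq_Ico (by norm_num) (by norm_num)]
  have hm1 : MeasurableSet (gMap ⁻¹' A ∩ Ico (0:ℝ) 2⁻¹) :=
    (gMap_measurable hA).inter measurableSet_Ico
  have hm2 : MeasurableSet (gMap ⁻¹' A ∩ Ico (2⁻¹:ℝ) 1) :=
    (gMap_measurable hA).inter measurableSet_Ico
  have hdisj : Disjoint (gMap ⁻¹' A ∩ Ico (0:ℝ) 2⁻¹) (gMap ⁻¹' A ∩ Ico (2⁻¹:ℝ) 1) := by
    apply Disjoint.inter_left' ; apply Disjoint.inter_right'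
    exact Ico_disjoint_Ico_same
  have hp1 : gMap ⁻¹' A ∩ Ico (0:ℝ) 2⁻¹
      = (fun x : ℝ => 2 * x) ⁻¹' (gMap ⁻¹' ((fun y => y / 3) ⁻¹' A) ∩ Ico (0:ℝ) 1) := by
    ext x
    simp only [mem_inter_iff, mem_preimage, mem_Ico]
    constructor
    · rintro ⟨hgx, hx0, hx1⟩
      have hd : cDig 0 x = 0 := cDig_zero_of_lt_half hx0 (by linarith)
      have := gMap_rec x
      rw [hd] at this
      constructor
      · show gMap (2 * x) / 3 ∈ A
        rw [show gMap (2*x) / 3 = gMap x by rw [this]; ring]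
        exact hgx
      · constructor <;> linarith
    · rintro ⟨hgx, hx0, hx1⟩
      have hx0' : 0 ≤ x := by linarith
      have hx1' : x < 2⁻¹ := by linarith
      have hd : cDig 0 x = 0 := cDig_zero_of_lt_half hx0' (by linarith)
      have := gMap_rec x
      rw [hd] at this
      refine ⟨?_, hx0', hx1'⟩
      show gMap x ∈ A
      rw [show gMap x = gMap (2*x) / 3 by rw [this]; ring]
      exact hgx
  have hp2 : gMap ⁻¹' A ∩ Ico (2⁻¹:ℝ) 1
      = (fun x : ℝ => 2 * x - 1) ⁻¹' (gMap ⁻¹' ((fun y => (y + 2) / 3) ⁻¹' A) ∩ Ico (0:ℝ) 1) := by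
    ext x
    simp only [mem_inter_iff, mem_preimage, mem_Ico]
    constructor
    · rintro ⟨hgx, hx0, hx1⟩
      have hd : cDig 0 x = 2 := cDig_zero_of_ge_half (by linarith) hx1
      have := gMap_rec' x
      rw [hd] at this
      constructor
      · show (gMap (2 * x - 1) + 2) / 3 ∈ A
        rw [show (gMap (2*x-1) + 2) / 3 = gMap x by rw [this]; ring]
        exact hgx
      · constructor <;> linarith
    · rintro ⟨hgx, hx0, hx1⟩
      have hx0' : 2⁻¹ ≤ x := by linarith
      have hx1' : x < 1 := by linarith
      have hd : cDig 0 x = 2 := cDig_zero_of_ge_half (by linarith) hx1'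
      have := gMap_rec' x
      rw [hd] at this
      refine ⟨?_, hx0', hx1'⟩
      show gMap x ∈ A
      rw [show gMap x = (gMap (2*x-1) + 2) / 3 by rw [this]; ring]
      exact hgx
  rw [cMu_apply hA, hsplit, measure_union hdisj hm2, hp1, hp2,
    vol_half_preimage ((gMap_measurable hA0).inter measurableSet_Ico),
    vol_affine_preimage ((gMap_measurable hA1).inter measurableSet_Ico),
    ← cMu_apply hA0, ← cMu_apply hA1]
section Analytic
variable {s : ℝ}

lemma key_concave (hs0 : 0 < s) (hs1 : s ≤ 1) {x y : ℝ} (hx : 0 ≤ x) (hy : 0 ≤ y) :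
    x ^ s + y ^ s ≤ 2 * ((x + y) / 2) ^ s := by
  have h := (Real.concaveOn_rpow hs0.le hs1).2 (mem_Ici.2 hx) (mem_Ici.2 hy)
    (by norm_num : (0:ℝ) ≤ 1/2) (by norm_num : (0:ℝ) ≤ 1/2) (by norm_num)
  simp only [smul_eq_mul] at h
  have e : (1/2 : ℝ) * x + (1/2) * y = (x + y) / 2 := by ring
  rw [e] at h
  linarith

lemma key_concave' (hs0 : 0 < s) (hs1 : s ≤ 1) {x y z : ℝ} (hx : 0 ≤ x) (hy : 0 ≤ y)
    (hz : (x + y)/2 ≤ z) : x ^ s + y ^ s ≤ 2 * z ^ s := by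
  refine le_trans (key_concave hs0 hs1 hx hy) ?_
  have := Real.rpow_le_rpow (by positivity) hz hs0.le
  linarith

lemma triple_rpow (h3s : (3:ℝ) ^ s = 2) {t : ℝ} (ht : 0 ≤ t) : (3 * t) ^ s = 2 * t ^ s := by
  rw [Real.mul_rpow (by norm_num) ht, h3s]

/-- main splitting inequality -/
lemma ineq_iv (hs0 : 0 < s) (hs1 : s ≤ 1) (h3s : (3:ℝ) ^ s = 2)
    {a b : ℝ} (ha : 0 ≤ a) (ha' : a ≤ 1/3) (hb : 0 ≤ b) (hb' : b ≤ 1/3) :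
    (3*a) ^ s / 2 + (3*b) ^ s / 2 ≤ (a + b + 1/3) ^ s := by
  rw [triple_rpow h3s ha, triple_rpow h3s hb]
  have h1 : a ^ s + b ^ s ≤ 2 * ((a+b)/2) ^ s := key_concave hs0 hs1 ha hb
  have h2 : 2 * ((a+b)/2) ^ s = (3 * ((a+b)/2)) ^ s := (triple_rpow h3s (by positivity)).symm
  have h3 : (3 * ((a+b)/2)) ^ s ≤ (a + b + 1/3) ^ s :=
    Real.rpow_le_rpow (by positivity) (by linarith) hs0.le
  linarith

/-- right-tail inequality -/
lemma ineq_ii (hs0 : 0 < s) (hs1 : s ≤ 1) {w : ℝ} (hw : 0 ≤ w) (hw' : w ≤ 1/3) :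
    (1 - 3*w) ^ s / 2 + 1/2 ≤ (1 - w) ^ s := by
  have h := key_concave' hs0 hs1 (x := 1 - 3*w) (y := 1) (z := 1 - w)
    (by linarith) (by norm_num) (by linarith)
  rw [Real.one_rpow] at h
  linarith

/-- left-tail inequality -/
lemma ineq_iii (hs0 : 0 < s) (hs1 : s ≤ 1) {w : ℝ} (hw : 2/3 ≤ w) (hw' : w ≤ 1) :
    1/2 + (3*w - 2) ^ s / 2 ≤ w ^ s := by
  have h := key_concave' hs0 hs1 (x := 1) (y := 3*w - 2) (z := w)
    (by norm_num) (by linarith) (by linarith)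
  rw [Real.one_rpow] at h
  linarith

end Analytic

section ENNRealHelpers

lemma half_ofReal (x : ℝ) : 2⁻¹ * ENNReal.ofReal x = ENNReal.ofReal (x / 2) := by
  rw [ENNReal.ofReal_div_of_pos (by norm_num), div_eq_mul_inv, mul_comm]
  norm_num

lemma half_one_ennreal : (2⁻¹ : ℝ≥0∞) = ENNReal.ofReal (1/2) := by
  rw [ENNReal.ofReal_div_of_pos (by norm_num)]
  norm_num

end ENNRealHelpers

lemma merge_cons {A : ℝ} (hA : 0 ≤ A) (N : ℕ) :
    2⁻¹ * (ENNReal.ofReal A + ENNReal.ofReal ((1/2) ^ N)) + 2⁻¹ * 1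
    = ENNReal.ofReal (A/2 + 1/2) + ENNReal.ofReal ((1/2) ^ (N+1)) := by
  rw [mul_add, mul_one, half_ofReal, half_ofReal, half_one_ennreal, add_right_comm,
    ← ENNReal.ofReal_add (by positivity) (by norm_num)]
  congr 1
  ring

lemma merge_cons' {A : ℝ} (hA : 0 ≤ A) (N : ℕ) :
    2⁻¹ * 1 + 2⁻¹ * (ENNReal.ofReal A + ENNReal.ofReal ((1/2) ^ N))
    = ENNReal.ofReal (1/2 + A/2) + ENNReal.ofReal ((1/2) ^ (N+1)) := by
  rw [add_comm (2⁻¹ * 1), merge_cons hA N]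
  congr 2
  ring

lemma merge_two {A : ℝ} (N : ℕ) :
    2⁻¹ * (ENNReal.ofReal (2*A) + ENNReal.ofReal ((1/2) ^ N))
    = ENNReal.ofReal A + ENNReal.ofReal ((1/2) ^ (N+1)) := by
  rw [mul_add, half_ofReal, half_ofReal]
  congr 1
  · congr 1; ring
  · congr 1; ring
lemma ennreal_limit {a : ℝ≥0∞} {c : ℝ}
    (h : ∀ N : ℕ, a ≤ ENNReal.ofReal c + ENNReal.ofReal ((1/2) ^ N)) :
    a ≤ ENNReal.ofReal c := by
  refine ENNReal.le_of_forall_pos_le_add fun ε hε _ => ?_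
  obtain ⟨N, hN⟩ := exists_pow_lt_of_lt_one (by exact_mod_cast hε : (0:ℝ) < (ε:ℝ))
    (by norm_num : (1/2 : ℝ) < 1)
  refine le_trans (h N) ?_
  gcongr
  rw [← ENNReal.ofReal_coe_nnreal]
  exact ENNReal.ofReal_le_ofReal hN.le

lemma cMu_self_Icc (u v : ℝ) :
    cMu (Icc u v) = 2⁻¹ * cMu (Icc (3*u) (3*v)) + 2⁻¹ * cMu (Icc (3*u-2) (3*v-2)) := by
  have h0 : (fun y : ℝ => y / 3) ⁻¹' Icc u v = Icc (3*u) (3*v) := by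
    ext y; simp only [mem_preimage, mem_Icc]
    constructor <;> rintro ⟨h1, h2⟩ <;> constructor <;> linarith
  have h1 : (fun y : ℝ => (y + 2) / 3) ⁻¹' Icc u v = Icc (3*u-2) (3*v-2) := by
    ext y; simp only [mem_preimage, mem_Icc]
    constructor <;> rintro ⟨h1, h2⟩ <;> constructor <;> linarith
  rw [cMu_self measurableSet_Icc, h0, h1]

section MassDistribution

variable {s : ℝ} (hs0 : 0 < s) (hs1 : s ≤ 1) (h3s : (3:ℝ) ^ s = 2)
variable {K : Set ℝ} (hsub : K ⊆ Icc (0:ℝ) 1)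
  (hgap : ∀ w ∈ K, w ≤ 1/3 ∨ 2/3 ≤ w)
  (hf5 : ∀ w ∈ K, w ≤ 1/3 → 3*w ∈ K)
  (hf6 : ∀ w ∈ K, 2/3 ≤ w → 3*w - 2 ∈ K)

include hs0 hs1 h3s hsub hgap hf5 hf6

lemma D_right : ∀ N : ℕ, ∀ w ∈ K,
    cMu (Icc w 1) ≤ ENNReal.ofReal ((1-w) ^ s) + ENNReal.ofReal ((1/2) ^ N) := by
  intro N
  induction N with
  | zero =>
    intro w _
    calc cMu (Icc w 1) ≤ 1 := cMu_le_one _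
    _ ≤ _ := by simp
  | succ N ih =>
    intro w hw
    obtain ⟨hw0, hw1⟩ := hsub hw
    rw [cMu_self_Icc w 1]
    rcases hgap w hw with hcase | hcase
    · -- w ≤ 1/3
      have h3w : 3*w ∈ K := hf5 w hw hcase
      have b1 : cMu (Icc (3*w) (3*1)) ≤
          ENNReal.ofReal ((1-3*w) ^ s) + ENNReal.ofReal ((1/2) ^ N) := by
        refine le_trans (cMu_cut_hi _ _) (ih (3*w) h3w)
      have b2 : cMu (Icc (3*w-2) (3*1-2)) ≤ 1 := cMu_le_one _
      calc 2⁻¹ * cMu (Icc (3*w) (3*1)) + 2⁻¹ * cMu (Icc (3*w-2) (3*1-2))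
          ≤ 2⁻¹ * (ENNReal.ofReal ((1-3*w) ^ s) + ENNReal.ofReal ((1/2) ^ N)) + 2⁻¹ * 1 := by
            gcongr
      _ = ENNReal.ofReal ((1-3*w) ^ s / 2 + 1/2) + ENNReal.ofReal ((1/2) ^ (N+1)) :=
            merge_cons (Real.rpow_nonneg (by linarith) s) N
      _ ≤ ENNReal.ofReal ((1-w) ^ s) + ENNReal.ofReal ((1/2) ^ (N+1)) := by
            gcongr
            exact ineq_ii hs0 hs1 hw0 hcase
    · -- 2/3 ≤ w
      have h3w : 3*w - 2 ∈ K := hf6 w hw hcase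
      have b1 : cMu (Icc (3*w) (3*1)) = 0 := cMu_Icc_zero_of_gt (by linarith)
      have b2 : cMu (Icc (3*w-2) (3*1-2)) ≤
          ENNReal.ofReal ((1-(3*w-2)) ^ s) + ENNReal.ofReal ((1/2) ^ N) := by
        have : (3*1-2 : ℝ) = 1 := by norm_num
        rw [this]
        exact ih (3*w-2) h3w
      have key : (1-(3*w-2) : ℝ) ^ s = 2 * (1-w) ^ s := by
        rw [show (1-(3*w-2) : ℝ) = 3 * (1-w) by ring, triple_rpow h3s (by linarith)]
      calc 2⁻¹ * cMu (Icc (3*w) (3*1)) + 2⁻¹ * cMu (Icc (3*w-2) (3*1-2))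
          ≤ 2⁻¹ * 0 + 2⁻¹ * (ENNReal.ofReal (2 * (1-w) ^ s) + ENNReal.ofReal ((1/2) ^ N)) := by
            rw [b1, ← key]; gcongr
      _ = ENNReal.ofReal ((1-w) ^ s) + ENNReal.ofReal ((1/2) ^ (N+1)) := by
            rw [mul_zero, zero_add, merge_two]

lemma D_left : ∀ N : ℕ, ∀ w ∈ K,
    cMu (Icc 0 w) ≤ ENNReal.ofReal (w ^ s) + ENNReal.ofReal ((1/2) ^ N) := by
  intro N
  induction N with
  | zero =>
    intro w _
    calc cMu (Icc 0 w) ≤ 1 := cMu_le_one _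
    _ ≤ _ := by simp
  | succ N ih =>
    intro w hw
    obtain ⟨hw0, hw1⟩ := hsub hw
    rw [cMu_self_Icc 0 w]
    rcases hgap w hw with hcase | hcase
    · -- w ≤ 1/3
      have h3w : 3*w ∈ K := hf5 w hw hcase
      have b1 : cMu (Icc (3*0) (3*w)) ≤
          ENNReal.ofReal ((3*w) ^ s) + ENNReal.ofReal ((1/2) ^ N) := by
        rw [show (3*0 : ℝ) = 0 by norm_num]
        exact ih (3*w) h3w
      have b2 : cMu (Icc (3*0-2) (3*w-2)) = 0 := cMu_Icc_zero_of_lt (by linarith)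
      have key : (3*w : ℝ) ^ s = 2 * w ^ s := triple_rpow h3s hw0
      calc 2⁻¹ * cMu (Icc (3*0) (3*w)) + 2⁻¹ * cMu (Icc (3*0-2) (3*w-2))
          ≤ 2⁻¹ * (ENNReal.ofReal (2 * w ^ s) + ENNReal.ofReal ((1/2) ^ N)) + 2⁻¹ * 0 := by
            rw [b2, ← key]; gcongr
      _ = ENNReal.ofReal (w ^ s) + ENNReal.ofReal ((1/2) ^ (N+1)) := by
            rw [mul_zero, add_zero, merge_two]
    · -- 2/3 ≤ w
      have h3w : 3*w - 2 ∈ K := hf6 w hw hcase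
      have b1 : cMu (Icc (3*0) (3*w)) ≤ 1 := cMu_le_one _
      have b2 : cMu (Icc (3*0-2) (3*w-2)) ≤
          ENNReal.ofReal ((3*w-2) ^ s) + ENNReal.ofReal ((1/2) ^ N) := by
        refine le_trans ?_ (ih (3*w-2) h3w)
        rw [show (3*0-2 : ℝ) = -2 by norm_num]
        exact cMu_cut_lo _ _
      calc 2⁻¹ * cMu (Icc (3*0) (3*w)) + 2⁻¹ * cMu (Icc (3*0-2) (3*w-2))
          ≤ 2⁻¹ * 1 + 2⁻¹ * (ENNReal.ofReal ((3*w-2) ^ s) + ENNReal.ofReal ((1/2) ^ N)) := by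
            gcongr
      _ = ENNReal.ofReal (1/2 + (3*w-2) ^ s / 2) + ENNReal.ofReal ((1/2) ^ (N+1)) :=
            merge_cons' (Real.rpow_nonneg (by linarith) s) N
      _ ≤ ENNReal.ofReal (w ^ s) + ENNReal.ofReal ((1/2) ^ (N+1)) := by
            gcongr
            exact ineq_iii hs0 hs1 hcase hw1

lemma D_right' : ∀ w ∈ K, cMu (Icc w 1) ≤ ENNReal.ofReal ((1-w) ^ s) :=
  fun w hw => ennreal_limit (fun N => D_right hs0 hs1 h3s hsub hgap hf5 hf6 N w hw)

lemma D_left' : ∀ w ∈ K, cMu (Icc 0 w) ≤ ENNReal.ofReal (w ^ s) :=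
  fun w hw => ennreal_limit (fun N => D_left hs0 hs1 h3s hsub hgap hf5 hf6 N w hw)

lemma C_main : ∀ N : ℕ, ∀ u ∈ K, ∀ v ∈ K, u ≤ v →
    cMu (Icc u v) ≤ ENNReal.ofReal ((v-u) ^ s) + ENNReal.ofReal ((1/2) ^ N) := by
  intro N
  induction N with
  | zero =>
    intro u _ v _ _
    calc cMu (Icc u v) ≤ 1 := cMu_le_one _
    _ ≤ _ := by simp
  | succ N ih =>
    intro u hu v hv huv
    obtain ⟨hu0, hu1⟩ := hsub hu
    obtain ⟨hv0, hv1⟩ := hsub hv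
    rw [cMu_self_Icc u v]
    rcases hgap v hv with hvcase | hvcase
    · -- v ≤ 1/3 : left piece only
      have b2 : cMu (Icc (3*u-2) (3*v-2)) = 0 := cMu_Icc_zero_of_lt (by linarith)
      have b1 : cMu (Icc (3*u) (3*v)) ≤
          ENNReal.ofReal ((3*v-3*u) ^ s) + ENNReal.ofReal ((1/2) ^ N) := by
        exact ih (3*u) (hf5 u hu (by linarith)) (3*v) (hf5 v hv hvcase) (by linarith)
      have key : (3*v-3*u : ℝ) ^ s = 2 * (v-u) ^ s := by
        rw [show (3*v-3*u : ℝ) = 3*(v-u) by ring, triple_rpow h3s (by linarith)]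
      calc 2⁻¹ * cMu (Icc (3*u) (3*v)) + 2⁻¹ * cMu (Icc (3*u-2) (3*v-2))
          ≤ 2⁻¹ * (ENNReal.ofReal (2 * (v-u) ^ s) + ENNReal.ofReal ((1/2) ^ N)) + 2⁻¹ * 0 := by
            rw [b2, ← key]; gcongr
      _ = ENNReal.ofReal ((v-u) ^ s) + ENNReal.ofReal ((1/2) ^ (N+1)) := by
            rw [mul_zero, add_zero, merge_two]
    · rcases hgap u hu with hucase | hucase
      · -- u ≤ 1/3 ≤ 2/3 ≤ v : split case, no induction needed
        have b1 : cMu (Icc (3*u) (3*v)) ≤ ENNReal.ofReal ((1-3*u) ^ s) := by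
          refine le_trans (cMu_cut_hi _ _) ?_
          exact D_right' hs0 hs1 h3s hsub hgap hf5 hf6 (3*u) (hf5 u hu hucase)
        have b2 : cMu (Icc (3*u-2) (3*v-2)) ≤ ENNReal.ofReal ((3*v-2) ^ s) := by
          refine le_trans (cMu_cut_lo _ _) ?_
          exact D_left' hs0 hs1 h3s hsub hgap hf5 hf6 (3*v-2) (hf6 v hv hvcase)
        have key : (1-3*u) ^ s / 2 + (3*v-2) ^ s / 2 ≤ (v-u) ^ s := by
          have h := ineq_iv hs0 hs1 h3s (a := 1/3 - u) (b := v - 2/3)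
            (by linarith) (by linarith) (by linarith) (by linarith)
          have e1 : (3*(1/3 - u) : ℝ) = 1 - 3*u := by ring
          have e2 : (3*(v - 2/3) : ℝ) = 3*v - 2 := by ring
          have e3 : ((1/3 - u) + (v - 2/3) + 1/3 : ℝ) = v - u := by ring
          rw [e1, e2, e3] at h
          exact h
        calc 2⁻¹ * cMu (Icc (3*u) (3*v)) + 2⁻¹ * cMu (Icc (3*u-2) (3*v-2))
            ≤ 2⁻¹ * ENNReal.ofReal ((1-3*u) ^ s) + 2⁻¹ * ENNReal.ofReal ((3*v-2) ^ s) := by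
              gcongr
        _ = ENNReal.ofReal ((1-3*u) ^ s / 2 + (3*v-2) ^ s / 2) := by
              rw [half_ofReal, half_ofReal, ← ENNReal.ofReal_add (by have := Real.rpow_nonneg (show (0:ℝ) ≤ 1-3*u by linarith) s; positivity) (by have := Real.rpow_nonneg (show (0:ℝ) ≤ 3*v-2 by linarith) s; positivity)]
        _ ≤ ENNReal.ofReal ((v-u) ^ s) := ENNReal.ofReal_le_ofReal key
        _ ≤ _ := le_self_add
      · -- 2/3 ≤ u : right piece only
        have b1 : cMu (Icc (3*u) (3*v)) = 0 := cMu_Icc_zero_of_gt (by linarith)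
        have b2 : cMu (Icc (3*u-2) (3*v-2)) ≤
            ENNReal.ofReal ((3*v-2-(3*u-2)) ^ s) + ENNReal.ofReal ((1/2) ^ N) := by
          exact ih (3*u-2) (hf6 u hu hucase) (3*v-2) (hf6 v hv (by linarith)) (by linarith)
        have key : (3*v-2-(3*u-2) : ℝ) ^ s = 2 * (v-u) ^ s := by
          rw [show (3*v-2-(3*u-2) : ℝ) = 3*(v-u) by ring, triple_rpow h3s (by linarith)]
        calc 2⁻¹ * cMu (Icc (3*u) (3*v)) + 2⁻¹ * cMu (Icc (3*u-2) (3*v-2))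
            ≤ 2⁻¹ * 0 + 2⁻¹ * (ENNReal.ofReal (2 * (v-u) ^ s) + ENNReal.ofReal ((1/2) ^ N)) := by
              rw [b1, ← key]; gcongr
        _ = ENNReal.ofReal ((v-u) ^ s) + ENNReal.ofReal ((1/2) ^ (N+1)) := by
              rw [mul_zero, zero_add, merge_two]

lemma C_main' : ∀ u ∈ K, ∀ v ∈ K, u ≤ v →
    cMu (Icc u v) ≤ ENNReal.ofReal ((v-u) ^ s) :=
  fun u hu v hv huv =>
    ennreal_limit (fun N => C_main hs0 hs1 h3s hsub hgap hf5 hf6 N u hu v hv huv)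

end MassDistribution
section KFacts

variable {K : Set ℝ} (hKc : IsCompact K) (hKne : K.Nonempty)
  (hK : (fun x => (3 : ℝ) * x) '' K = K ∪ (fun x => x + 2) '' K)

include hKc hKne hK in
lemma K_sub_Icc : K ⊆ Icc (0:ℝ) 1 := by
  obtain ⟨M, hMK, hMub⟩ := hKc.exists_isGreatest hKne
  obtain ⟨m, hmK, hmlb⟩ := hKc.exists_isLeast hKne
  have hG3 : IsGreatest ((fun x => (3:ℝ)*x) '' K) (3*M) := by
    refine ⟨⟨M, hMK, rfl⟩, ?_⟩
    rintro x ⟨k, hk, rfl⟩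
    have := hMub hk
    simp only
    linarith
  have hGU : IsGreatest (K ∪ (fun x => x + 2) '' K) (M + 2) := by
    constructor
    · exact Or.inr ⟨M, hMK, rfl⟩
    · rintro x (hx | ⟨k, hk, rfl⟩)
      · have := hMub hx; linarith
      · have := hMub hk; simp only; linarith
  have hL3 : IsLeast ((fun x => (3:ℝ)*x) '' K) (3*m) := by
    refine ⟨⟨m, hmK, rfl⟩, ?_⟩
    rintro x ⟨k, hk, rfl⟩
    have := hmlb hk
    simp only
    linarith
  have hLU : IsLeast (K ∪ (fun x => x + 2) '' K) m := by
    constructor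
    · exact Or.inl hmK
    · rintro x (hx | ⟨k, hk, rfl⟩)
      · exact hmlb hx
      · have := hmlb hk; simp only; linarith
  rw [hK] at hG3 hL3
  have hM : (3:ℝ)*M = M + 2 := hG3.unique hGU
  have hm : (3:ℝ)*m = m := hL3.unique hLU
  intro x hx
  exact ⟨by have := hmlb hx; linarith, by have := hMub hx; linarith⟩

include hKc hKne hK in
lemma K_f0 : ∀ x ∈ K, x/3 ∈ K := by
  intro x hx
  have : x ∈ (fun x => (3 : ℝ) * x) '' K := hK ▸ Or.inl hx
  obtain ⟨y, hy, hxy⟩ := this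
  simp only at hxy
  rwa [show x/3 = y by rw [← hxy]; ring]

include hKc hKne hK in
lemma K_f1 : ∀ x ∈ K, (x+2)/3 ∈ K := by
  intro x hx
  have : x + 2 ∈ (fun x => (3 : ℝ) * x) '' K := hK ▸ Or.inr ⟨x, hx, rfl⟩
  obtain ⟨y, hy, hxy⟩ := this
  simp only at hxy
  rwa [show (x+2)/3 = y by rw [← hxy]; ring]

include hKc hKne hK in
lemma K_decomp : ∀ x ∈ K, 3*x ∈ K ∪ (fun x => x + 2) '' K := by
  intro x hx
  rw [← hK]
  exact ⟨x, hx, rfl⟩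

include hKc hKne hK in
lemma K_gap : ∀ w ∈ K, w ≤ 1/3 ∨ 2/3 ≤ w := by
  intro w hw
  rcases K_decomp hKc hKne hK w hw with h | ⟨k, hk, hk2⟩
  · have := (K_sub_Icc hKc hKne hK h).2
    left; linarith
  · have := (K_sub_Icc hKc hKne hK hk).1
    simp only at hk2
    right; linarith

include hKc hKne hK in
lemma K_hf5 : ∀ w ∈ K, w ≤ 1/3 → 3*w ∈ K := by
  intro w hw hle
  rcases K_decomp hKc hKne hK w hw with h | ⟨k, hk, hk2⟩
  · exact h
  · have := (K_sub_Icc hKc hKne hK hk).1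
    simp only at hk2
    linarith

include hKc hKne hK in
lemma K_hf6 : ∀ w ∈ K, 2/3 ≤ w → 3*w - 2 ∈ K := by
  intro w hw hle
  rcases K_decomp hKc hKne hK w hw with h | ⟨k, hk, hk2⟩
  · have := (K_sub_Icc hKc hKne hK h).2
    linarith
  · simp only at hk2
    rwa [show 3*w - 2 = k by linarith]

include hKc hKne hK in
lemma gMap_approx : ∀ N : ℕ, ∀ x : ℝ, 0 ≤ x → x < 1 →
    ∃ z ∈ K, |gMap x - z| ≤ (1/3) ^ N := by
  intro N
  induction N with
  | zero =>
    intro x hx0 hx1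
    have hsub := K_sub_Icc hKc hKne hK
    obtain ⟨z, hz⟩ := hKne
    obtain ⟨hz0, hz1⟩ := hsub hz
    refine ⟨z, hz, ?_⟩
    rw [pow_zero, abs_le]
    have := gMap_nonneg x
    have := gMap_le_one x
    constructor <;> linarith
  | succ N ih =>
    intro x hx0 hx1
    rcases lt_or_ge x (1/2) with hhalf | hhalf
    · obtain ⟨z', hz', hdist⟩ := ih (2*x) (by linarith) (by linarith)
      refine ⟨z'/3, K_f0 hKc hKne hK z' hz', ?_⟩
      have hrec : gMap x = gMap (2*x) / 3 := by
        have := gMap_rec x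
        rw [cDig_zero_of_lt_half hx0 hhalf] at this
        rw [this]; ring
      have : gMap x - z'/3 = (gMap (2*x) - z') / 3 := by rw [hrec]; ring
      rw [this, abs_div, abs_of_pos (by norm_num : (0:ℝ) < 3)]
      rw [div_le_iff₀ (by norm_num : (0:ℝ) < 3)]
      calc |gMap (2*x) - z'| ≤ (1/3)^N := hdist
      _ = (1/3)^(N+1) * 3 := by ring
    · obtain ⟨z', hz', hdist⟩ := ih (2*x - 1) (by linarith) (by linarith)
      refine ⟨(z'+2)/3, K_f1 hKc hKne hK z' hz', ?_⟩
      have hrec : gMap x = (gMap (2*x - 1) + 2) / 3 := by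
        have := gMap_rec' x
        rw [cDig_zero_of_ge_half hhalf hx1] at this
        rw [this]; ring
      have : gMap x - (z'+2)/3 = (gMap (2*x-1) - z') / 3 := by rw [hrec]; ring
      rw [this, abs_div, abs_of_pos (by norm_num : (0:ℝ) < 3)]
      rw [div_le_iff₀ (by norm_num : (0:ℝ) < 3)]
      calc |gMap (2*x-1) - z'| ≤ (1/3)^N := hdist
      _ = (1/3)^(N+1) * 3 := by ring

include hKc hKne hK in
lemma gMap_mem_K : ∀ x : ℝ, 0 ≤ x → x < 1 → gMap x ∈ K := by
  intro x hx0 hx1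
  have hcl : gMap x ∈ closure K := by
    rw [Metric.mem_closure_iff]
    intro ε hε
    obtain ⟨N, hN⟩ := exists_pow_lt_of_lt_one hε (by norm_num : (1/3 : ℝ) < 1)
    obtain ⟨z, hz, hdist⟩ := gMap_approx hKc hKne hK N x hx0 hx1
    exact ⟨z, hz, lt_of_le_of_lt (by rwa [Real.dist_eq]) hN⟩
  rwa [hKc.isClosed.closure_eq] at hcl

include hKc hKne hK in
lemma cMu_K : cMu K = 1 := by
  rw [cMu_apply hKc.isClosed.measurableSet]
  have : gMap ⁻¹' K ∩ Ico (0:ℝ) 1 = Ico 0 1 := by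
    rw [inter_eq_right]
    intro x hx
    exact gMap_mem_K hKc hKne hK x hx.1 hx.2
  rw [this, Real.volume_Ico]
  norm_num

include hKc hKne hK in
lemma cMu_K_compl : cMu Kᶜ = 0 := by
  rw [cMu_apply hKc.isClosed.measurableSet.compl]
  convert measure_empty (μ := (volume : Measure ℝ))
  rw [eq_empty_iff_forall_notMem]
  rintro x ⟨hx, hx2⟩
  exact hx (gMap_mem_K hKc hKne hK x hx2.1 hx2.2)

end KFacts
section Lower

variable {s : ℝ} (hs0 : 0 < s) (hs1 : s ≤ 1) (h3s : (3:ℝ) ^ s = 2)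
variable {K : Set ℝ} (hKc : IsCompact K) (hKne : K.Nonempty)
  (hK : (fun x => (3 : ℝ) * x) '' K = K ∪ (fun x => x + 2) '' K)

include hs0 hs1 h3s hKc hKne hK in
lemma cMu_set_bound : ∀ U : Set ℝ, EMetric.diam U ≤ 1 →
    cMu U ≤ EMetric.diam U ^ s := by
  intro U _
  by_cases hUK : (U ∩ K).Nonempty
  · set u := sInf (U ∩ K) with hu_def
    set v := sSup (U ∩ K) with hv_def
    have hbb : BddBelow (U ∩ K) := hKc.bddBelow.mono inter_subset_right
    have hba : BddAbove (U ∩ K) := hKc.bddAbove.mono inter_subset_right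
    have hucl : u ∈ closure (U ∩ K) := csInf_mem_closure hUK hbb
    have hvcl : v ∈ closure (U ∩ K) := csSup_mem_closure hUK hba
    have huK : u ∈ K := by
      have := closure_mono (inter_subset_right : U ∩ K ⊆ K) hucl
      rwa [hKc.isClosed.closure_eq] at this
    have hvK : v ∈ K := by
      have := closure_mono (inter_subset_right : U ∩ K ⊆ K) hvcl
      rwa [hKc.isClosed.closure_eq] at this
    have huv : u ≤ v := Real.sInf_le_sSup _ hbb hba
    have hsubU : U ⊆ Icc u v ∪ Kᶜ := by
      intro x hx
      by_cases hxK : x ∈ K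
      · exact Or.inl ⟨csInf_le hbb ⟨hx, hxK⟩, le_csSup hba ⟨hx, hxK⟩⟩
      · exact Or.inr hxK
    have hIcc : cMu (Icc u v) ≤ ENNReal.ofReal ((v - u) ^ s) :=
      C_main' hs0 hs1 h3s (K_sub_Icc hKc hKne hK) (K_gap hKc hKne hK)
        (K_hf5 hKc hKne hK) (K_hf6 hKc hKne hK) u huK v hvK huv
    have hedist : ENNReal.ofReal (v - u) ≤ EMetric.diam U := by
      have hu' : u ∈ closure U := closure_mono inter_subset_left hucl
      have hv' : v ∈ closure U := closure_mono inter_subset_left hvcl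
      have := EMetric.edist_le_diam_of_mem hu' hv'
      rw [EMetric.diam_closure] at this
      refine le_trans (le_of_eq ?_) this
      rw [edist_dist, Real.dist_eq, abs_sub_comm, abs_of_nonneg (by linarith)]
    calc cMu U ≤ cMu (Icc u v) + cMu Kᶜ :=
          le_trans (measure_mono hsubU) (measure_union_le _ _)
    _ = cMu (Icc u v) := by rw [cMu_K_compl hKc hKne hK, add_zero]
    _ ≤ ENNReal.ofReal ((v - u) ^ s) := hIcc
    _ = ENNReal.ofReal (v - u) ^ s := (ENNReal.ofReal_rpow_of_nonneg (by linarith) hs0.le).symm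
    _ ≤ EMetric.diam U ^ s := ENNReal.rpow_le_rpow hedist hs0.le
  · have : U ⊆ Kᶜ := by
      intro x hx
      by_contra hxK
      exact hUK ⟨x, hx, not_not.mp hxK⟩
    calc cMu U ≤ cMu Kᶜ := measure_mono this
    _ = 0 := cMu_K_compl hKc hKne hK
    _ ≤ _ := zero_le

include hs0 hs1 h3s hKc hKne hK in
lemma hausdorff_lower : 1 ≤ Measure.hausdorffMeasure s K := by
  have hle : cMu ≤ Measure.hausdorffMeasure s :=
    Measure.le_hausdorffMeasure s cMu 1 one_pos
      (fun U hU => cMu_set_bound hs0 hs1 h3s hKc hKne hK U hU)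
  calc (1:ℝ≥0∞) = cMu K := (cMu_K hKc hKne hK).symm
  _ ≤ Measure.hausdorffMeasure s K := hle K

end Lower
section Upper

variable {s : ℝ} (hs0 : 0 < s) (hs1 : s ≤ 1) (h3s : (3:ℝ) ^ s = 2)
variable {K : Set ℝ} (hKc : IsCompact K) (hKne : K.Nonempty)
  (hK : (fun x => (3 : ℝ) * x) '' K = K ∪ (fun x => x + 2) '' K)

/-- the `n`-th level covering pieces -/
noncomputable def piece (K : Set ℝ) (n : ℕ) (w : Fin n → Bool) : Set ℝ :=
  (fun x => x / 3^n + ∑ i : Fin n, (if w i then (2:ℝ) else 0) / 3^(i.1+1)) '' K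

include hKc hKne hK in
lemma piece_cover : ∀ n : ℕ, K ⊆ ⋃ w : Fin n → Bool, piece K n w := by
  intro n
  induction n with
  | zero =>
    intro x hx
    refine mem_iUnion.2 ⟨fun i => false, ⟨x, hx, ?_⟩⟩
    simp
  | succ n ih =>
    intro x hx
    have hdec := K_decomp hKc hKne hK x hx
    obtain ⟨y, hy, b, hxy⟩ : ∃ y ∈ K, ∃ b : Bool, x = (y + (if b then (2:ℝ) else 0)) / 3 := by
      rcases hdec with h | ⟨k, hk, hk2⟩
      · exact ⟨3*x, h, false, by norm_num⟩
      · refine ⟨k, hk, true, ?_⟩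
        simp only at hk2
        rw [if_pos rfl]
        linarith
    obtain ⟨w, a, ha, hay⟩ := mem_iUnion.1 (ih hy)
    refine mem_iUnion.2 ⟨Fin.cons b w, ⟨a, ha, ?_⟩⟩
    simp only at hay ⊢
    rw [Fin.sum_univ_succ]
    simp only [Fin.cons_zero, Fin.cons_succ, Fin.val_zero, Fin.val_succ]
    have hS3 : (∑ i : Fin n, (if w i then (2:ℝ) else 0) / 3^(i.1+1)) / 3
        = ∑ i : Fin n, (if w i then (2:ℝ) else 0) / 3^(i.1+1+1) := by
      rw [Finset.sum_div]
      refine Finset.sum_congr rfl fun i _ => ?_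
      rw [div_div, ← pow_succ]
    rw [hxy, ← hay]
    rw [← hS3]
    rw [pow_succ]
    ring

lemma piece_diam (hsub : K ⊆ Icc (0:ℝ) 1) (n : ℕ) (w : Fin n → Bool) :
    EMetric.diam (piece K n w) ≤ ENNReal.ofReal ((1/3)^n) := by
  apply EMetric.diam_le
  rintro x ⟨a, ha, rfl⟩ y ⟨b, hb, rfl⟩
  obtain ⟨ha0, ha1⟩ := hsub ha
  obtain ⟨hb0, hb1⟩ := hsub hb
  rw [edist_dist, Real.dist_eq]
  apply ENNReal.ofReal_le_ofReal
  have : (a / 3^n + ∑ i : Fin n, (if w i then (2:ℝ) else 0) / 3^(i.1+1))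
      - (b / 3^n + ∑ i : Fin n, (if w i then (2:ℝ) else 0) / 3^(i.1+1)) = (a - b) / 3^n := by
    ring
  rw [this, abs_div, abs_of_pos (by positivity : (0:ℝ) < 3^n), div_pow, one_pow]
  have habs : |a - b| ≤ 1 := by rw [abs_le]; constructor <;> linarith
  gcongr

include hs0 h3s in
lemma piece_sum (hsub : K ⊆ Icc (0:ℝ) 1) (n : ℕ) :
    ∑ w : Fin n → Bool, EMetric.diam (piece K n w) ^ s ≤ 1 := by
  have hterm : ∀ w : Fin n → Bool,
      EMetric.diam (piece K n w) ^ s ≤ ENNReal.ofReal ((2⁻¹ : ℝ)^n) := by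
    intro w
    have h1 := ENNReal.rpow_le_rpow (piece_diam hsub n w) hs0.le
    refine le_trans h1 (le_of_eq ?_)
    rw [ENNReal.ofReal_rpow_of_nonneg (by positivity) hs0.le]
    congr 1
    have h13 : ((1/3 : ℝ))^n = ((3:ℝ)⁻¹)^n := by norm_num
    rw [h13, ← Real.rpow_natCast ((3:ℝ)⁻¹) n, ← Real.rpow_mul (by norm_num), mul_comm,
      Real.rpow_mul (by norm_num), Real.inv_rpow (by norm_num), h3s, Real.rpow_natCast]
  calc ∑ w : Fin n → Bool, EMetric.diam (piece K n w) ^ s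
      ≤ (Finset.univ (α := Fin n → Bool)).card • ENNReal.ofReal ((2⁻¹ : ℝ)^n) :=
        Finset.sum_le_card_nsmul _ _ _ (fun w _ => hterm w)
  _ = 1 := by
    rw [Finset.card_univ, nsmul_eq_mul]
    have hcard : Fintype.card (Fin n → Bool) = 2^n := by
      rw [Fintype.card_fun]
      simp
    rw [hcard, Nat.cast_pow, ENNReal.ofReal_pow (by norm_num : (0:ℝ) ≤ 2⁻¹), ← mul_pow]
    have h2 : ((2:ℕ):ℝ≥0∞) * ENNReal.ofReal (2⁻¹:ℝ) = 1 := by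
      rw [Nat.cast_ofNat, ENNReal.ofReal_inv_of_pos (by norm_num), ENNReal.ofReal_ofNat]
      exact ENNReal.mul_inv_cancel (by norm_num) (by norm_num)
    rw [h2, one_pow]

include hs0 hs1 h3s hKc hKne hK in
lemma hausdorff_upper : Measure.hausdorffMeasure s K ≤ 1 := by
  have hsub := K_sub_Icc hKc hKne hK
  have hr : Filter.Tendsto (fun n : ℕ => ENNReal.ofReal ((1/3:ℝ)^n)) Filter.atTop (nhds 0) := by
    have h := tendsto_pow_atTop_nhds_zero_of_lt_one (by norm_num : (0:ℝ) ≤ 1/3)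
      (by norm_num : (1/3:ℝ) < 1)
    have := ENNReal.tendsto_ofReal (h := h)
    simpa using this
  have hcov := Measure.hausdorffMeasure_le_liminf_sum s K
    (fun n : ℕ => ENNReal.ofReal ((1/3:ℝ)^n)) hr (piece K)
    (Filter.Eventually.of_forall (fun n i => piece_diam hsub n i))
    (Filter.Eventually.of_forall (piece_cover hKc hKne hK))
  refine le_trans hcov ?_
  have hsum : ∀ n : ℕ, ∑ w : Fin n → Bool, EMetric.diam (piece K n w) ^ s ≤ 1 :=
    piece_sum hs0 h3s hsub
  calc Filter.liminf (fun n => ∑ w : Fin n → Bool, EMetric.diam (piece K n w) ^ s) Filter.atTop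
      ≤ Filter.liminf (fun _ : ℕ => (1:ℝ≥0∞)) Filter.atTop :=
        Filter.liminf_le_liminf (Filter.Eventually.of_forall hsum)
  _ = 1 := Filter.liminf_const 1

end Upper
/-- **Example.** Let `K` be the unique nonempty compact subset of `ℝ` satisfying
`3·K = K ∪ (K + 2)` (the classical middle-thirds Cantor set). Then `H^s(K) = 1`, where
`s = log 2 / log 3`. -/
theorem hausdorff_measure_middle_thirds (K : Set ℝ) (hKc : IsCompact K) (hKne : K.Nonempty)
    (hK : (fun x => (3 : ℝ) * x) '' K = K ∪ (fun x => x + 2) '' K)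
    (s : ℝ) (hs : s = Real.log 2 / Real.log 3) :
    Measure.hausdorffMeasure s K = 1 := by
  have hlog2 : (0:ℝ) < Real.log 2 := Real.log_pos (by norm_num)
  have hlog3 : (0:ℝ) < Real.log 3 := Real.log_pos (by norm_num)
  have hs0 : 0 < s := hs ▸ div_pos hlog2 hlog3
  have hs1 : s ≤ 1 := by
    rw [hs, div_le_one hlog3]
    exact Real.log_le_log (by norm_num) (by norm_num)
  have h3s : (3:ℝ) ^ s = 2 := by
    rw [hs, Real.rpow_def_of_pos (by norm_num : (0:ℝ) < 3)]
    have : Real.log 3 * (Real.log 2 / Real.log 3) = Real.log 2 := by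
      field_simp
    rw [this, Real.exp_log (by norm_num)]
  exact le_antisymm (hausdorff_upper hs0 hs1 h3s hKc hKne hK)
    (hausdorff_lower hs0 hs1 h3s hKc hKne hK)
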